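/- Consider a streaming least-squares setup satisfying the stability hypotheses with parameters κ, δ, θ, λ, where δ ∈ [0,1) and 0 ≤ θ < (1−δ)/2, set ε = (1+δ)/2 − √((1−δ)²/4 − θ²), and suppose M_y = κ^{−1/2}·sup_{k≥0} ‖(y_k, y_{k+1})‖₂ is finite. Then for all k ≥ 0: (i) ‖α_{k|k}‖₂ ≤ λ^{−1}·(1 + θ/(1−ε−θ))·√(1+δ)·M_y, and (ii) ‖α_{k|k+1}‖₂ ≤ ((1 + λ^{−1}θ)/(1−ε−θ))·√(1+δ)·M_y. -/

import Mathlib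

open Matrix

/-- Euclidean (ℓ²) norm of a vector in ℝ^n. -/
noncomputable def vecNorm {n : Type*} [Fintype n] (v : n → ℝ) : ℝ :=
  Real.sqrt (∑ i, v i ^ 2)

/-- Spectral norm (largest singular value) of a real matrix, defined as the operator
norm: the supremum of `‖A x‖₂` over unit vectors `x`. -/
noncomputable def matSpectralNorm {m n : Type*} [Fintype m] [Fintype n]
    (A : Matrix m n ℝ) : ℝ :=
  sSup ((fun x => vecNorm (A.mulVec x)) '' {x | vecNorm x = 1})

/-- Smallest eigenvalue of a real symmetric matrix, via the Rayleigh quotient. -/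
noncomputable def eigMin {n : Type*} [Fintype n] (S : Matrix n n ℝ) : ℝ :=
  sInf ((fun x => x ⬝ᵥ S.mulVec x) '' {x | vecNorm x = 1})

section Streaming

variable {N : ℕ} {M : ℕ → ℕ}

/-- `D_k = A_kᵀ A_k + B_{k+1}ᵀ B_{k+1} + λ_k I`. -/
noncomputable def Dmat (A B : ∀ k : ℕ, Matrix (Fin (M k)) (Fin N) ℝ) (lam : ℕ → ℝ)
    (k : ℕ) : Matrix (Fin N) (Fin N) ℝ :=
  (A k)ᵀ * A k + (B (k + 1))ᵀ * B (k + 1) + lam k • 1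

/-- `E_k = A_{k+1}ᵀ B_{k+1}`. -/
noncomputable def Emat (A B : ∀ k : ℕ, Matrix (Fin (M k)) (Fin N) ℝ) (k : ℕ) :
    Matrix (Fin N) (Fin N) ℝ :=
  (A (k + 1))ᵀ * B (k + 1)

/-- `D_k' = A_kᵀ A_k + λ_k I`. -/
noncomputable def Dmat' (A : ∀ k : ℕ, Matrix (Fin (M k)) (Fin N) ℝ) (lam : ℕ → ℝ)
    (k : ℕ) : Matrix (Fin N) (Fin N) ℝ :=
  (A k)ᵀ * A k + lam k • 1

/-- `Q₀ = D₀`, `Q_{k+1} = D_{k+1} − E_k U_k` with `U_k = Q_k⁻¹ E_kᵀ`. -/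
noncomputable def Qmat (A B : ∀ k : ℕ, Matrix (Fin (M k)) (Fin N) ℝ) (lam : ℕ → ℝ) :
    ℕ → Matrix (Fin N) (Fin N) ℝ
  | 0 => Dmat A B lam 0
  | k + 1 => Dmat A B lam (k + 1) - Emat A B k * ((Qmat A B lam k)⁻¹ * (Emat A B k)ᵀ)

/-- `U_k = Q_k⁻¹ E_kᵀ`. -/
noncomputable def Umat (A B : ∀ k : ℕ, Matrix (Fin (M k)) (Fin N) ℝ) (lam : ℕ → ℝ)
    (k : ℕ) : Matrix (Fin N) (Fin N) ℝ :=
  (Qmat A B lam k)⁻¹ * (Emat A B k)ᵀ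

/-- `Q₀' = D₀'`, `Q_k' = D_k' − E_{k−1} U_{k−1}` for `k ≥ 1`. -/
noncomputable def Qmat' (A B : ∀ k : ℕ, Matrix (Fin (M k)) (Fin N) ℝ) (lam : ℕ → ℝ) :
    ℕ → Matrix (Fin N) (Fin N) ℝ
  | 0 => Dmat' A lam 0
  | k + 1 => Dmat' A lam (k + 1) - Emat A B k * Umat A B lam k

/-- `w_k = A_kᵀ y_k + B_{k+1}ᵀ y_{k+1}`. -/
noncomputable def wvec (A B : ∀ k : ℕ, Matrix (Fin (M k)) (Fin N) ℝ)
    (y : ∀ k : ℕ, Fin (M k) → ℝ) (k : ℕ) : Fin N → ℝ :=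
  (A k)ᵀ.mulVec (y k) + (B (k + 1))ᵀ.mulVec (y (k + 1))

/-- `w_k' = A_kᵀ y_k`. -/
noncomputable def wvec' (A : ∀ k : ℕ, Matrix (Fin (M k)) (Fin N) ℝ)
    (y : ∀ k : ℕ, Fin (M k) → ℝ) (k : ℕ) : Fin N → ℝ :=
  (A k)ᵀ.mulVec (y k)

/-- `v₀ = Q₀⁻¹ w₀`, `v_k = Q_k⁻¹ (w_k − E_{k−1} v_{k−1})` for `k ≥ 1`. -/
noncomputable def vvec (A B : ∀ k : ℕ, Matrix (Fin (M k)) (Fin N) ℝ) (lam : ℕ → ℝ)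
    (y : ∀ k : ℕ, Fin (M k) → ℝ) : ℕ → Fin N → ℝ
  | 0 => (Qmat A B lam 0)⁻¹.mulVec (wvec A B y 0)
  | k + 1 => (Qmat A B lam (k + 1))⁻¹.mulVec
      (wvec A B y (k + 1) - (Emat A B k).mulVec (vvec A B lam y k))

/-- `v₀' = Q₀'⁻¹ w₀'`, `v_K' = Q_K'⁻¹ (w_K' − E_{K−1} v_{K−1})` for `K ≥ 1`. -/
noncomputable def vvec' (A B : ∀ k : ℕ, Matrix (Fin (M k)) (Fin N) ℝ) (lam : ℕ → ℝ)
    (y : ∀ k : ℕ, Fin (M k) → ℝ) : ℕ → Fin N → ℝ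
  | 0 => (Qmat' A B lam 0)⁻¹.mulVec (wvec' A y 0)
  | K + 1 => (Qmat' A B lam (K + 1))⁻¹.mulVec
      (wvec' A y (K + 1) - (Emat A B K).mulVec (vvec A B lam y K))

/-- Backward recursion producing the streaming least-squares estimates, indexed by the
lag `l = K − k`: `alphaAux K 0 = v_K'` and `alphaAux K (l+1) = v_{K−l−1} − U_{K−l−1} ·
alphaAux K l`. -/
noncomputable def alphaAux (A B : ∀ k : ℕ, Matrix (Fin (M k)) (Fin N) ℝ) (lam : ℕ → ℝ)
    (y : ∀ k : ℕ, Fin (M k) → ℝ) (K : ℕ) : ℕ → Fin N → ℝ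
  | 0 => vvec' A B lam y K
  | l + 1 => vvec A B lam y (K - (l + 1)) -
      (Umat A B lam (K - (l + 1))).mulVec (alphaAux A B lam y K l)

/-- The streaming least-squares estimate `α_{k|K}` (for `0 ≤ k ≤ K`): it satisfies
`α_{K|K} = v_K'` and `α_{k|K} = v_k − U_k α_{k+1|K}` for `k < K`. -/
noncomputable def alphaEst (A B : ∀ k : ℕ, Matrix (Fin (M k)) (Fin N) ℝ) (lam : ℕ → ℝ)
    (y : ∀ k : ℕ, Fin (M k) → ℝ) (k K : ℕ) : Fin N → ℝ :=
  alphaAux A B lam y K (K - k)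

end Streaming

section Helpers

variable {m n : Type*} [Fintype m] [Fintype n]

lemma vecNorm_nonneg (v : n → ℝ) : 0 ≤ vecNorm v := Real.sqrt_nonneg _

lemma vecNorm_sq (v : n → ℝ) : vecNorm v ^ 2 = ∑ i, v i ^ 2 :=
  Real.sq_sqrt (Finset.sum_nonneg fun _ _ => sq_nonneg _)

lemma dot_self_eq_vecNorm_sq (v : n → ℝ) : v ⬝ᵥ v = vecNorm v ^ 2 := by
  rw [vecNorm_sq]; simp [dotProduct, sq]

lemma vecNorm_zero : vecNorm (0 : n → ℝ) = 0 := by simp [vecNorm]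

lemma vecNorm_pos {v : n → ℝ} (h : v ≠ 0) : 0 < vecNorm v := by
  rcases (vecNorm_nonneg v).lt_or_eq with h1 | h1
  · exact h1
  · exfalso; apply h; funext i
    have h2 : ∑ j, v j ^ 2 = 0 := by
      have h3 := vecNorm_sq v; rw [← h1] at h3; simpa using h3.symm
    have h4 := (Finset.sum_eq_zero_iff_of_nonneg (fun j _ => sq_nonneg (v j))).1 h2 i
      (Finset.mem_univ i)
    exact pow_eq_zero_iff (two_ne_zero) |>.1 h4

lemma vecNorm_smul (c : ℝ) (v : n → ℝ) : vecNorm (c • v) = |c| * vecNorm v := by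
  unfold vecNorm
  rw [show ∑ i, (c • v) i ^ 2 = c ^ 2 * ∑ i, v i ^ 2 by
    rw [Finset.mul_sum]; exact Finset.sum_congr rfl fun i _ => by simp [mul_pow],
    Real.sqrt_mul (sq_nonneg c), Real.sqrt_sq_eq_abs]

lemma vecNorm_neg (v : n → ℝ) : vecNorm (-v) = vecNorm v := by
  unfold vecNorm; congr 1; exact Finset.sum_congr rfl fun i _ => by simp

lemma dot_le_vecNorm (u v : n → ℝ) : u ⬝ᵥ v ≤ vecNorm u * vecNorm v := by
  have h := Finset.sum_mul_sq_le_sq_mul_sq Finset.univ u v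
  calc u ⬝ᵥ v ≤ |u ⬝ᵥ v| := le_abs_self _
    _ = Real.sqrt ((u ⬝ᵥ v) ^ 2) := (Real.sqrt_sq_eq_abs _).symm
    _ ≤ Real.sqrt ((∑ i, u i ^ 2) * ∑ i, v i ^ 2) := Real.sqrt_le_sqrt (by simpa [dotProduct])
    _ = vecNorm u * vecNorm v := by
        rw [Real.sqrt_mul (Finset.sum_nonneg fun _ _ => sq_nonneg _)]; rfl

lemma neg_dot_le_vecNorm (u v : n → ℝ) : -(u ⬝ᵥ v) ≤ vecNorm u * vecNorm v := by
  have := dot_le_vecNorm (-u) v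
  rwa [neg_dotProduct, vecNorm_neg] at this

lemma vecNorm_add_le (u v : n → ℝ) : vecNorm (u + v) ≤ vecNorm u + vecNorm v := by
  have hd := dot_le_vecNorm u v
  have hexp : ∑ i, (u + v) i ^ 2 = (∑ i, u i ^ 2) + 2 * (u ⬝ᵥ v) + ∑ i, v i ^ 2 := by
    simp only [Pi.add_apply, dotProduct, Finset.mul_sum]
    rw [← Finset.sum_add_distrib, ← Finset.sum_add_distrib]
    exact Finset.sum_congr rfl fun i _ => by ring
  have h2 : ∑ i, (u + v) i ^ 2 ≤ (vecNorm u + vecNorm v) ^ 2 := by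
    have hu := vecNorm_sq u; have hv := vecNorm_sq v
    nlinarith [vecNorm_nonneg u, vecNorm_nonneg v]
  calc vecNorm (u + v) ≤ Real.sqrt ((vecNorm u + vecNorm v) ^ 2) := Real.sqrt_le_sqrt h2
    _ = vecNorm u + vecNorm v := Real.sqrt_sq (add_nonneg (vecNorm_nonneg u) (vecNorm_nonneg v))

lemma vecNorm_sub_le (u v : n → ℝ) : vecNorm (u - v) ≤ vecNorm u + vecNorm v := by
  have := vecNorm_add_le u (-v)
  rwa [← sub_eq_add_neg, vecNorm_neg] at this

lemma two_term_cs {a b c d : ℝ} (ha : 0 ≤ a) (hb : 0 ≤ b) (hc : 0 ≤ c) (hd : 0 ≤ d) :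
    a * b + c * d ≤ Real.sqrt (a ^ 2 + c ^ 2) * Real.sqrt (b ^ 2 + d ^ 2) := by
  rw [← Real.sqrt_mul (by positivity)]
  rw [show a * b + c * d = Real.sqrt ((a * b + c * d) ^ 2) from
    (Real.sqrt_sq (by positivity)).symm]
  exact Real.sqrt_le_sqrt (by nlinarith [sq_nonneg (a * d - c * b)])

lemma mulVec_le_frob (A : Matrix m n ℝ) (x : n → ℝ) :
    vecNorm (A.mulVec x) ≤ Real.sqrt (∑ i, ∑ j, A i j ^ 2) * vecNorm x := by
  have hcomp : ∀ i, (A.mulVec x i) ^ 2 ≤ (∑ j, A i j ^ 2) * ∑ j, x j ^ 2 := fun i =>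
    Finset.sum_mul_sq_le_sq_mul_sq Finset.univ (A i) x
  have h1 : ∑ i, (A.mulVec x i) ^ 2 ≤ (∑ i, ∑ j, A i j ^ 2) * ∑ j, x j ^ 2 := by
    rw [Finset.sum_mul]
    exact Finset.sum_le_sum fun i _ => hcomp i
  calc vecNorm (A.mulVec x) ≤ Real.sqrt ((∑ i, ∑ j, A i j ^ 2) * ∑ j, x j ^ 2) :=
        Real.sqrt_le_sqrt h1
    _ = _ := by
        exact Real.sqrt_mul (Finset.sum_nonneg fun i _ =>
          Finset.sum_nonneg fun j _ => sq_nonneg (A i j)) _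

end Helpers

section Ops
variable {m n : Type*} [Fintype m] [Fintype n]

lemma spectralNorm_mulVec_le (A : Matrix m n ℝ) {c : ℝ}
    (hc : matSpectralNorm A ≤ c) (x : n → ℝ) :
    vecNorm (A.mulVec x) ≤ c * vecNorm x := by
  have hbdd : BddAbove ((fun x => vecNorm (A.mulVec x)) '' {x | vecNorm x = 1}) := by
    refine ⟨Real.sqrt (∑ i, ∑ j, A i j ^ 2), ?_⟩
    rintro r ⟨z, hz, rfl⟩
    have h := mulVec_le_frob A z
    rw [Set.mem_setOf_eq.mp hz, mul_one] at h
    exact h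
  by_cases hx : x = 0
  · subst hx; simp [Matrix.mulVec_zero, vecNorm_zero]
  · have hxpos := vecNorm_pos hx
    set u := (vecNorm x)⁻¹ • x with hu_def
    have hu : vecNorm u = 1 := by
      rw [hu_def, vecNorm_smul, abs_of_nonneg (inv_nonneg.mpr hxpos.le),
        inv_mul_cancel₀ hxpos.ne']
    have h1 : vecNorm (A.mulVec u) ≤ c :=
      (le_csSup hbdd ⟨u, hu, rfl⟩).trans hc
    have h2 : A.mulVec u = (vecNorm x)⁻¹ • A.mulVec x := Matrix.mulVec_smul _ _ _
    rw [h2, vecNorm_smul, abs_of_nonneg (inv_nonneg.mpr hxpos.le)] at h1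
    calc vecNorm (A.mulVec x) = vecNorm x * ((vecNorm x)⁻¹ * vecNorm (A.mulVec x)) := by
          field_simp
      _ ≤ vecNorm x * c := by
          exact mul_le_mul_of_nonneg_left h1 hxpos.le
      _ = c * vecNorm x := mul_comm _ _

lemma eigMin_rayleigh (Q : Matrix n n ℝ) {c : ℝ} (hc : c ≤ eigMin Q) (x : n → ℝ) :
    c * vecNorm x ^ 2 ≤ x ⬝ᵥ Q.mulVec x := by
  have hbb : BddBelow ((fun x => x ⬝ᵥ Q.mulVec x) '' {x | vecNorm x = 1}) := by
    refine ⟨-Real.sqrt (∑ i, ∑ j, Q i j ^ 2), ?_⟩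
    rintro r ⟨z, hz, rfl⟩
    have hz1 : vecNorm z = 1 := hz
    have h1 : -(z ⬝ᵥ Q.mulVec z) ≤ vecNorm z * vecNorm (Q.mulVec z) :=
      neg_dot_le_vecNorm z _
    have h2 := mulVec_le_frob Q z
    rw [hz1] at h1 h2
    simp only [one_mul, mul_one] at h1 h2
    dsimp only
    linarith
  by_cases hx : x = 0
  · subst hx; simp [Matrix.mulVec_zero, vecNorm_zero]
  · have hxpos := vecNorm_pos hx
    set u := (vecNorm x)⁻¹ • x with hu_def
    have hu : vecNorm u = 1 := by
      rw [hu_def, vecNorm_smul, abs_of_nonneg (inv_nonneg.mpr hxpos.le),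
        inv_mul_cancel₀ hxpos.ne']
    have h1 : c ≤ u ⬝ᵥ Q.mulVec u := hc.trans (csInf_le hbb ⟨u, hu, rfl⟩)
    have h2 : u ⬝ᵥ Q.mulVec u = (vecNorm x)⁻¹ ^ 2 * (x ⬝ᵥ Q.mulVec x) := by
      rw [hu_def, Matrix.mulVec_smul, smul_dotProduct, dotProduct_smul]
      simp [smul_eq_mul]; ring
    rw [h2] at h1
    have h3 : c * vecNorm x ^ 2 ≤ (vecNorm x)⁻¹ ^ 2 * (x ⬝ᵥ Q.mulVec x) * vecNorm x ^ 2 :=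
      mul_le_mul_of_nonneg_right h1 (sq_nonneg _)
    calc c * vecNorm x ^ 2 ≤ _ := h3
      _ = x ⬝ᵥ Q.mulVec x := by field_simp

lemma coercive_inv [DecidableEq n] (Q : Matrix n n ℝ) {c : ℝ} (hc : 0 < c)
    (h : ∀ x, c * vecNorm x ^ 2 ≤ x ⬝ᵥ Q.mulVec x) :
    Q.det ≠ 0 ∧ ∀ y, vecNorm (Q⁻¹.mulVec y) ≤ c⁻¹ * vecNorm y := by
  have hdet : Q.det ≠ 0 := by
    intro h0
    obtain ⟨v, hv0, hQv⟩ := Matrix.exists_mulVec_eq_zero_iff.2 h0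
    have h1 := h v
    rw [hQv] at h1
    simp only [dotProduct_zero] at h1
    exact absurd h1 (not_le.2 (mul_pos hc (pow_pos (vecNorm_pos hv0) 2)))
  refine ⟨hdet, fun y => ?_⟩
  set x := Q⁻¹.mulVec y with hx_def
  have hQx : Q.mulVec x = y := by
    rw [hx_def, Matrix.mulVec_mulVec, Matrix.mul_nonsing_inv Q (isUnit_iff_ne_zero.2 hdet),
      Matrix.one_mulVec]
  have h1 : c * vecNorm x ^ 2 ≤ x ⬝ᵥ y := by rw [← hQx]; exact h x
  have h2 : x ⬝ᵥ y ≤ vecNorm x * vecNorm y := dot_le_vecNorm x y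
  rcases (vecNorm_nonneg x).eq_or_lt with h3 | h3
  · rw [← h3]
    exact mul_nonneg (inv_nonneg.2 hc.le) (vecNorm_nonneg y)
  · have h4 : c * vecNorm x ≤ vecNorm y := by nlinarith
    rw [inv_mul_eq_div, le_div_iff₀ hc]
    linarith [mul_comm c (vecNorm x)]

lemma transpose_mulVec_le (E : Matrix m n ℝ) {c : ℝ} (hc0 : 0 ≤ c)
    (h : ∀ x, vecNorm (E.mulVec x) ≤ c * vecNorm x) (y : m → ℝ) :
    vecNorm (Eᵀ.mulVec y) ≤ c * vecNorm y := by
  set x := Eᵀ.mulVec y with hx_def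
  have key : vecNorm x ^ 2 = y ⬝ᵥ E.mulVec x := by
    rw [← dot_self_eq_vecNorm_sq, Matrix.dotProduct_mulVec y E x, ← Matrix.mulVec_transpose,
      ← hx_def]
  have h2 : y ⬝ᵥ E.mulVec x ≤ vecNorm y * (c * vecNorm x) :=
    (dot_le_vecNorm _ _).trans (mul_le_mul_of_nonneg_left (h x) (vecNorm_nonneg y))
  rcases (vecNorm_nonneg x).eq_or_lt with h3 | h3
  · rw [← h3]; exact mul_nonneg hc0 (vecNorm_nonneg y)
  · nlinarith

end Ops

section Aux

lemma quad_split {N : ℕ} {M : ℕ → ℕ} (A B : ∀ k : ℕ, Matrix (Fin (M k)) (Fin N) ℝ)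
    (lam : ℕ → ℝ) (j : ℕ) (x : Fin N → ℝ) :
    x ⬝ᵥ (Dmat A B lam j).mulVec x
      = vecNorm ((A j).mulVec x) ^ 2 + vecNorm ((B (j + 1)).mulVec x) ^ 2
        + lam j * vecNorm x ^ 2 := by
  have hA : x ⬝ᵥ (((A j)ᵀ * A j) *ᵥ x) = vecNorm ((A j).mulVec x) ^ 2 := by
    rw [← Matrix.mulVec_mulVec, Matrix.dotProduct_mulVec, Matrix.vecMul_transpose,
      dot_self_eq_vecNorm_sq]
  have hB : x ⬝ᵥ (((B (j + 1))ᵀ * B (j + 1)) *ᵥ x) = vecNorm ((B (j + 1)).mulVec x) ^ 2 := by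
    rw [← Matrix.mulVec_mulVec, Matrix.dotProduct_mulVec, Matrix.vecMul_transpose,
      dot_self_eq_vecNorm_sq]
  show x ⬝ᵥ (((A j)ᵀ * A j + (B (j + 1))ᵀ * B (j + 1) + lam j • 1).mulVec x) = _
  rw [Matrix.add_mulVec, Matrix.add_mulVec, dotProduct_add, dotProduct_add, hA, hB,
    Matrix.smul_mulVec, Matrix.one_mulVec, dotProduct_smul, smul_eq_mul,
    dot_self_eq_vecNorm_sq]

end Aux

set_option maxHeartbeats 1000000 in
/-- uniform bounds on the streaming least-squares estimates: under the
stability hypotheses with parameters `κ, δ, θ, λ` and with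
`M_y = κ^{−1/2}·sup_k ‖(y_k, y_{k+1})‖₂` finite,
(i) `‖α_{k|k}‖₂ ≤ λ⁻¹(1 + θ/(1−ε−θ))√(1+δ)·M_y`, and
(ii) `‖α_{k|k+1}‖₂ ≤ ((1 + λ⁻¹θ)/(1−ε−θ))√(1+δ)·M_y`. -/
theorem streaming_estimates_uniform_bound
    (N : ℕ) (hN : 1 ≤ N) (M : ℕ → ℕ)
    (A B : ∀ k : ℕ, Matrix (Fin (M k)) (Fin N) ℝ)
    (y : ∀ k : ℕ, Fin (M k) → ℝ) (lam : ℕ → ℝ) (hlam : ∀ k, 0 ≤ lam k)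
    (κ δ θ lam0 : ℝ) (hκ : 1 ≤ κ) (hδ0 : 0 ≤ δ) (hδ1 : δ < 1)
    (hθ0 : 0 ≤ θ) (hθ : θ < (1 - δ) / 2) (hlam0 : 0 < lam0)
    (hD : ∀ k, matSpectralNorm (Dmat A B lam k - κ • (1 : Matrix (Fin N) (Fin N) ℝ)) ≤ κ * δ)
    (hE : ∀ k, matSpectralNorm (Emat A B k) ≤ κ * θ)
    (hQ' : ∀ k, κ * lam0 ≤ eigMin (Qmat' A B lam k))
    (ε : ℝ) (hε : ε = (1 + δ) / 2 - Real.sqrt ((1 - δ) ^ 2 / 4 - θ ^ 2))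
    (My : ℝ)
    (hbdd : BddAbove (Set.range fun k : ℕ =>
      Real.sqrt ((∑ i, y k i ^ 2) + ∑ i, y (k + 1) i ^ 2) / Real.sqrt κ))
    (hMy : My = sSup (Set.range fun k : ℕ =>
      Real.sqrt ((∑ i, y k i ^ 2) + ∑ i, y (k + 1) i ^ 2) / Real.sqrt κ)) :
    ∀ k : ℕ,
      vecNorm (alphaEst A B lam y k k) ≤
        lam0⁻¹ * (1 + θ / (1 - ε - θ)) * Real.sqrt (1 + δ) * My ∧
      vecNorm (alphaEst A B lam y k (k + 1)) ≤
        ((1 + lam0⁻¹ * θ) / (1 - ε - θ)) * Real.sqrt (1 + δ) * My := by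
  classical
  have hκ0 : (0:ℝ) < κ := lt_of_lt_of_le one_pos hκ
  have hsq_nn : (0:ℝ) ≤ (1 - δ) ^ 2 / 4 - θ ^ 2 := by nlinarith
  set s := Real.sqrt ((1 - δ) ^ 2 / 4 - θ ^ 2) with hs_def
  have hs2 : s ^ 2 = (1 - δ) ^ 2 / 4 - θ ^ 2 := Real.sq_sqrt hsq_nn
  have hs0 : 0 ≤ s := Real.sqrt_nonneg _
  have hεθ : 0 < 1 - ε - θ := by rw [hε]; linarith
  have hεpos : 0 < 1 - ε := by linarith
  have hδε : δ ≤ ε := by rw [hε]; nlinarith [hs2, hs0, sq_nonneg θ]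
  have hfix : (1 - ε) * (1 - δ) - θ ^ 2 = (1 - ε) ^ 2 := by
    rw [hε]; linear_combination -hs2
  -- My nonneg and data bound
  have hMy0 : 0 ≤ My := by
    rw [hMy]
    refine le_trans ?_ (le_csSup hbdd ⟨0, rfl⟩)
    positivity
  have hzb : ∀ j : ℕ, Real.sqrt ((∑ i, y j i ^ 2) + ∑ i, y (j + 1) i ^ 2)
      ≤ Real.sqrt κ * My := by
    intro j
    have h1 : Real.sqrt ((∑ i, y j i ^ 2) + ∑ i, y (j + 1) i ^ 2) / Real.sqrt κ ≤ My := by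
      rw [hMy]; exact le_csSup hbdd ⟨j, rfl⟩
    have hκs : 0 < Real.sqrt κ := Real.sqrt_pos.2 hκ0
    calc Real.sqrt ((∑ i, y j i ^ 2) + ∑ i, y (j + 1) i ^ 2)
        = Real.sqrt κ * (Real.sqrt ((∑ i, y j i ^ 2) + ∑ i, y (j + 1) i ^ 2) / Real.sqrt κ) := by
          field_simp
      _ ≤ Real.sqrt κ * My := mul_le_mul_of_nonneg_left h1 hκs.le
  -- Rayleigh bounds for D
  have hDsplit : ∀ (j : ℕ) (x : Fin N → ℝ), x ⬝ᵥ (Dmat A B lam j).mulVec x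
      = κ * vecNorm x ^ 2 + x ⬝ᵥ ((Dmat A B lam j - κ • 1).mulVec x) := by
    intro j x
    rw [Matrix.sub_mulVec, dotProduct_sub, Matrix.smul_mulVec, Matrix.one_mulVec,
      dotProduct_smul, smul_eq_mul, dot_self_eq_vecNorm_sq]
    ring
  have hDup : ∀ (j : ℕ) (x : Fin N → ℝ),
      x ⬝ᵥ (Dmat A B lam j).mulVec x ≤ κ * (1 + δ) * vecNorm x ^ 2 := by
    intro j x
    have h1 : x ⬝ᵥ ((Dmat A B lam j - κ • 1).mulVec x)
        ≤ vecNorm x * (κ * δ * vecNorm x) :=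
      (dot_le_vecNorm x _).trans
        (mul_le_mul_of_nonneg_left (spectralNorm_mulVec_le _ (hD j) x) (vecNorm_nonneg x))
    rw [hDsplit j x]; nlinarith [h1]
  have hDlow : ∀ (j : ℕ) (x : Fin N → ℝ),
      κ * (1 - δ) * vecNorm x ^ 2 ≤ x ⬝ᵥ (Dmat A B lam j).mulVec x := by
    intro j x
    have h1 : -(x ⬝ᵥ ((Dmat A B lam j - κ • 1).mulVec x))
        ≤ vecNorm x * (κ * δ * vecNorm x) :=
      (neg_dot_le_vecNorm x _).trans
        (mul_le_mul_of_nonneg_left (spectralNorm_mulVec_le _ (hD j) x) (vecNorm_nonneg x))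
    rw [hDsplit j x]; nlinarith [h1]
  -- E bounds
  have hκθ : (0:ℝ) ≤ κ * θ := mul_nonneg hκ0.le hθ0
  have hEpt : ∀ (j : ℕ) (x : Fin N → ℝ),
      vecNorm ((Emat A B j).mulVec x) ≤ κ * θ * vecNorm x :=
    fun j x => spectralNorm_mulVec_le _ (hE j) x
  have hEtpt : ∀ (j : ℕ) (x : Fin N → ℝ),
      vecNorm ((Emat A B j)ᵀ.mulVec x) ≤ κ * θ * vecNorm x :=
    fun j => transpose_mulVec_le _ hκθ (hEpt j)
  -- Q coercivity
  have hκε : (0:ℝ) < κ * (1 - ε) := mul_pos hκ0 hεpos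
  have hQco : ∀ (j : ℕ) (x : Fin N → ℝ),
      κ * (1 - ε) * vecNorm x ^ 2 ≤ x ⬝ᵥ (Qmat A B lam j).mulVec x := by
    intro j
    induction j with
    | zero =>
      intro x
      have h1 := hDlow 0 x
      simp only [Qmat]
      nlinarith [sq_nonneg (vecNorm x),
        mul_nonneg (mul_nonneg hκ0.le (sub_nonneg.2 hδε)) (sq_nonneg (vecNorm x))]
    | succ j ih =>
      obtain ⟨hdet, hinv⟩ := coercive_inv _ hκε ih
      intro x
      have hsplit : x ⬝ᵥ (Qmat A B lam (j + 1)).mulVec x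
          = x ⬝ᵥ (Dmat A B lam (j + 1)).mulVec x
            - ((Emat A B j)ᵀ.mulVec x) ⬝ᵥ
                ((Qmat A B lam j)⁻¹.mulVec ((Emat A B j)ᵀ.mulVec x)) := by
        simp only [Qmat]
        rw [Matrix.sub_mulVec, dotProduct_sub, ← Matrix.mulVec_mulVec, ← Matrix.mulVec_mulVec,
          Matrix.dotProduct_mulVec x (Emat A B j), ← Matrix.mulVec_transpose]
      set z := (Emat A B j)ᵀ.mulVec x with hz_def
      have hz : vecNorm z ≤ κ * θ * vecNorm x := hEtpt j x
      have h2 : z ⬝ᵥ ((Qmat A B lam j)⁻¹.mulVec z) ≤ (κ * (1 - ε))⁻¹ * vecNorm z ^ 2 := by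
        have ha := dot_le_vecNorm z ((Qmat A B lam j)⁻¹.mulVec z)
        have hb := hinv z
        nlinarith [vecNorm_nonneg z]
      have hz2 : vecNorm z ^ 2 ≤ (κ * θ) ^ 2 * vecNorm x ^ 2 := by
        nlinarith [vecNorm_nonneg z, vecNorm_nonneg x]
      have h4 : z ⬝ᵥ ((Qmat A B lam j)⁻¹.mulVec z)
          ≤ (κ * (1 - ε))⁻¹ * ((κ * θ) ^ 2 * vecNorm x ^ 2) :=
        h2.trans (mul_le_mul_of_nonneg_left hz2 (inv_nonneg.2 hκε.le))
      have heq : (κ * (1 - ε))⁻¹ * (κ * θ) ^ 2 = κ * (1 - δ) - κ * (1 - ε) := by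
        rw [inv_mul_eq_div, div_eq_iff hκε.ne']
        linear_combination (-κ^2) * hfix
      have h5 : (κ * (1 - δ) - κ * (1 - ε)) * vecNorm x ^ 2
          = (κ * (1 - ε))⁻¹ * ((κ * θ) ^ 2 * vecNorm x ^ 2) := by
        rw [← heq]; ring
      have hD1 := hDlow (j + 1) x
      rw [hsplit]
      linarith [h4, h5]
  have hQinv : ∀ (j : ℕ) (u : Fin N → ℝ),
      vecNorm ((Qmat A B lam j)⁻¹.mulVec u) ≤ (κ * (1 - ε))⁻¹ * vecNorm u :=
    fun j => (coercive_inv _ hκε (hQco j)).2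
  -- Q' inverse bound
  have hKlam : (0:ℝ) < κ * lam0 := mul_pos hκ0 hlam0
  have hQ'inv : ∀ (j : ℕ) (u : Fin N → ℝ),
      vecNorm ((Qmat' A B lam j)⁻¹.mulVec u) ≤ (κ * lam0)⁻¹ * vecNorm u :=
    fun j => (coercive_inv _ hKlam (fun x => eigMin_rayleigh _ (hQ' j) x)).2
  have h1δ : (0:ℝ) ≤ 1 + δ := by linarith
  have hS0 : (0:ℝ) ≤ Real.sqrt (1 + δ) * My := mul_nonneg (Real.sqrt_nonneg _) hMy0
  have hss : Real.sqrt κ * Real.sqrt κ = κ := Real.mul_self_sqrt hκ0.le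
  -- w bound
  have hwb : ∀ j : ℕ, vecNorm (wvec A B y j) ≤ κ * (Real.sqrt (1 + δ) * My) := by
    intro j
    have hid : vecNorm (wvec A B y j) ^ 2
        = y j ⬝ᵥ ((A j).mulVec (wvec A B y j))
          + y (j + 1) ⬝ᵥ ((B (j + 1)).mulVec (wvec A B y j)) := by
      rw [← dot_self_eq_vecNorm_sq]
      nth_rewrite 1 [show wvec A B y j
        = (A j)ᵀ.mulVec (y j) + (B (j + 1))ᵀ.mulVec (y (j + 1)) from rfl]
      rw [add_dotProduct, Matrix.mulVec_transpose, Matrix.mulVec_transpose,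
        ← Matrix.dotProduct_mulVec, ← Matrix.dotProduct_mulVec]
    have hpq : vecNorm ((A j).mulVec (wvec A B y j)) ^ 2
        + vecNorm ((B (j + 1)).mulVec (wvec A B y j)) ^ 2
        ≤ κ * (1 + δ) * vecNorm (wvec A B y j) ^ 2 := by
      have h1 := quad_split A B lam j (wvec A B y j)
      have h2 := hDup j (wvec A B y j)
      have h3 : 0 ≤ lam j * vecNorm (wvec A B y j) ^ 2 :=
        mul_nonneg (hlam j) (sq_nonneg _)
      linarith
    have hcs : y j ⬝ᵥ ((A j).mulVec (wvec A B y j))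
          + y (j + 1) ⬝ᵥ ((B (j + 1)).mulVec (wvec A B y j))
        ≤ Real.sqrt (vecNorm (y j) ^ 2 + vecNorm (y (j + 1)) ^ 2)
          * Real.sqrt (vecNorm ((A j).mulVec (wvec A B y j)) ^ 2
            + vecNorm ((B (j + 1)).mulVec (wvec A B y j)) ^ 2) := by
      have h1 := dot_le_vecNorm (y j) ((A j).mulVec (wvec A B y j))
      have h2 := dot_le_vecNorm (y (j + 1)) ((B (j + 1)).mulVec (wvec A B y j))
      have h3 := two_term_cs (vecNorm_nonneg (y j)) (vecNorm_nonneg ((A j).mulVec (wvec A B y j)))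
        (vecNorm_nonneg (y (j + 1))) (vecNorm_nonneg ((B (j + 1)).mulVec (wvec A B y j)))
      linarith
    have hZ : Real.sqrt (vecNorm (y j) ^ 2 + vecNorm (y (j + 1)) ^ 2) ≤ Real.sqrt κ * My := by
      rw [vecNorm_sq, vecNorm_sq]; exact hzb j
    have hR : Real.sqrt (vecNorm ((A j).mulVec (wvec A B y j)) ^ 2
          + vecNorm ((B (j + 1)).mulVec (wvec A B y j)) ^ 2)
        ≤ Real.sqrt κ * Real.sqrt (1 + δ) * vecNorm (wvec A B y j) := by
      calc _ ≤ Real.sqrt (κ * (1 + δ) * vecNorm (wvec A B y j) ^ 2) := Real.sqrt_le_sqrt hpq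
        _ = _ := by
          rw [Real.sqrt_mul (mul_nonneg hκ0.le h1δ), Real.sqrt_mul hκ0.le,
            Real.sqrt_sq (vecNorm_nonneg _)]
    have hww : vecNorm (wvec A B y j) ^ 2
        ≤ (Real.sqrt κ * My) * (Real.sqrt κ * Real.sqrt (1 + δ) * vecNorm (wvec A B y j)) := by
      rw [hid]
      exact hcs.trans (mul_le_mul hZ hR (Real.sqrt_nonneg _)
        (mul_nonneg (Real.sqrt_nonneg _) hMy0))
    have hww2 : vecNorm (wvec A B y j) ^ 2
        ≤ κ * (Real.sqrt (1 + δ) * My) * vecNorm (wvec A B y j) := by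
      calc vecNorm (wvec A B y j) ^ 2 ≤ _ := hww
        _ = (Real.sqrt κ * Real.sqrt κ) * (Real.sqrt (1 + δ) * My * vecNorm (wvec A B y j)) := by
            ring
        _ = _ := by rw [hss]; ring
    rcases (vecNorm_nonneg (wvec A B y j)).eq_or_lt with h0 | h0
    · rw [← h0]; exact mul_nonneg hκ0.le hS0
    · nlinarith [hww2]
  -- w' bound
  have hw'b : ∀ j : ℕ, vecNorm (wvec' A y j) ≤ κ * (Real.sqrt (1 + δ) * My) := by
    intro j
    have hid : vecNorm (wvec' A y j) ^ 2 = y j ⬝ᵥ ((A j).mulVec (wvec' A y j)) := by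
      rw [← dot_self_eq_vecNorm_sq]
      nth_rewrite 1 [show wvec' A y j = (A j)ᵀ.mulVec (y j) from rfl]
      rw [Matrix.mulVec_transpose, ← Matrix.dotProduct_mulVec]
    have hp : vecNorm ((A j).mulVec (wvec' A y j)) ^ 2
        ≤ κ * (1 + δ) * vecNorm (wvec' A y j) ^ 2 := by
      have h1 := quad_split A B lam j (wvec' A y j)
      have h2 := hDup j (wvec' A y j)
      have h3 : 0 ≤ lam j * vecNorm (wvec' A y j) ^ 2 := mul_nonneg (hlam j) (sq_nonneg _)
      nlinarith [sq_nonneg (vecNorm ((B (j + 1)).mulVec (wvec' A y j)))]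
    have hy : vecNorm (y j) ≤ Real.sqrt κ * My := by
      refine le_trans ?_ (hzb j)
      rw [show vecNorm (y j) = Real.sqrt (∑ i, y j i ^ 2) from rfl]
      exact Real.sqrt_le_sqrt (le_add_of_nonneg_right (by positivity))
    have hpn : vecNorm ((A j).mulVec (wvec' A y j))
        ≤ Real.sqrt κ * Real.sqrt (1 + δ) * vecNorm (wvec' A y j) := by
      have h1 : vecNorm ((A j).mulVec (wvec' A y j))
          ≤ Real.sqrt (κ * (1 + δ) * vecNorm (wvec' A y j) ^ 2) := by
        rw [show vecNorm ((A j).mulVec (wvec' A y j))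
          = Real.sqrt (vecNorm ((A j).mulVec (wvec' A y j)) ^ 2) from
            (Real.sqrt_sq (vecNorm_nonneg _)).symm]
        exact Real.sqrt_le_sqrt hp
      calc _ ≤ _ := h1
        _ = _ := by
          rw [Real.sqrt_mul (mul_nonneg hκ0.le h1δ), Real.sqrt_mul hκ0.le,
            Real.sqrt_sq (vecNorm_nonneg _)]
    have hww : vecNorm (wvec' A y j) ^ 2
        ≤ (Real.sqrt κ * My) * (Real.sqrt κ * Real.sqrt (1 + δ) * vecNorm (wvec' A y j)) := by
      rw [hid]
      exact (dot_le_vecNorm _ _).trans (mul_le_mul hy hpn (vecNorm_nonneg _)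
        (mul_nonneg (Real.sqrt_nonneg _) hMy0))
    have hww2 : vecNorm (wvec' A y j) ^ 2
        ≤ κ * (Real.sqrt (1 + δ) * My) * vecNorm (wvec' A y j) := by
      calc vecNorm (wvec' A y j) ^ 2 ≤ _ := hww
        _ = (Real.sqrt κ * Real.sqrt κ) * (Real.sqrt (1 + δ) * My * vecNorm (wvec' A y j)) := by
            ring
        _ = _ := by rw [hss]; ring
    rcases (vecNorm_nonneg (wvec' A y j)).eq_or_lt with h0 | h0
    · rw [← h0]; exact mul_nonneg hκ0.le hS0
    · nlinarith [hww2]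
  -- v bound
  set Cv := Real.sqrt (1 + δ) * My / (1 - ε - θ) with hCv_def
  have hCv0 : 0 ≤ Cv := div_nonneg hS0 hεθ.le
  have hCveq : (1 - ε - θ) * Cv = Real.sqrt (1 + δ) * My := by
    rw [hCv_def]; field_simp
  have hvb : ∀ j : ℕ, vecNorm (vvec A B lam y j) ≤ Cv := by
    intro j
    induction j with
    | zero =>
      have h1 : vecNorm (vvec A B lam y 0)
          ≤ (κ * (1 - ε))⁻¹ * vecNorm (wvec A B y 0) := by
        simp only [vvec]; exact hQinv 0 _
      have h2 : (κ * (1 - ε))⁻¹ * vecNorm (wvec A B y 0)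
          ≤ (κ * (1 - ε))⁻¹ * (κ * (Real.sqrt (1 + δ) * My)) :=
        mul_le_mul_of_nonneg_left (hwb 0) (inv_nonneg.2 hκε.le)
      have h3 : (κ * (1 - ε))⁻¹ * (κ * (Real.sqrt (1 + δ) * My))
          = Real.sqrt (1 + δ) * My / (1 - ε) := by
        field_simp
      have h4 : Real.sqrt (1 + δ) * My / (1 - ε) ≤ Cv := by
        rw [hCv_def]
        exact div_le_div_of_nonneg_left hS0 hεθ (by linarith)
      linarith
    | succ j ih =>
      have h2 : vecNorm (wvec A B y (j + 1) - (Emat A B j).mulVec (vvec A B lam y j))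
          ≤ κ * (Real.sqrt (1 + δ) * My) + κ * θ * Cv := by
        refine (vecNorm_sub_le _ _).trans ?_
        have h3 := hwb (j + 1)
        have h4 := (hEpt j (vvec A B lam y j)).trans (mul_le_mul_of_nonneg_left ih hκθ)
        linarith
      have h1 : vecNorm (vvec A B lam y (j + 1))
          ≤ (κ * (1 - ε))⁻¹ * (κ * (Real.sqrt (1 + δ) * My) + κ * θ * Cv) := by
        simp only [vvec]
        exact (hQinv (j + 1) _).trans (mul_le_mul_of_nonneg_left h2 (inv_nonneg.2 hκε.le))
      refine h1.trans ?_
      rw [inv_mul_le_iff₀ hκε]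
      have h5 : κ * ((1 - ε - θ) * Cv) = κ * (Real.sqrt (1 + δ) * My) := by rw [hCveq]
      nlinarith [h5]
  -- v' bound
  have hv'b : ∀ j : ℕ, vecNorm (vvec' A B lam y j)
      ≤ lam0⁻¹ * (1 + θ / (1 - ε - θ)) * Real.sqrt (1 + δ) * My := by
    intro j
    cases j with
    | zero =>
      have h1 : vecNorm (vvec' A B lam y 0) ≤ (κ * lam0)⁻¹ * vecNorm (wvec' A y 0) := by
        simp only [vvec']; exact hQ'inv 0 _
      have h2 : (κ * lam0)⁻¹ * vecNorm (wvec' A y 0)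
          ≤ (κ * lam0)⁻¹ * (κ * (Real.sqrt (1 + δ) * My)) :=
        mul_le_mul_of_nonneg_left (hw'b 0) (inv_nonneg.2 hKlam.le)
      have h3 : (κ * lam0)⁻¹ * (κ * (Real.sqrt (1 + δ) * My))
          = lam0⁻¹ * (Real.sqrt (1 + δ) * My) := by
        field_simp
      have h4 : 0 ≤ lam0⁻¹ * (θ / (1 - ε - θ)) * (Real.sqrt (1 + δ) * My) :=
        mul_nonneg (mul_nonneg (inv_nonneg.2 hlam0.le) (div_nonneg hθ0 hεθ.le)) hS0
      nlinarith [h1, h2, h3, h4]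
    | succ j =>
      have h2 : vecNorm (wvec' A y (j + 1) - (Emat A B j).mulVec (vvec A B lam y j))
          ≤ κ * (Real.sqrt (1 + δ) * My) + κ * θ * Cv := by
        refine (vecNorm_sub_le _ _).trans ?_
        have h3 := hw'b (j + 1)
        have h4 := (hEpt j (vvec A B lam y j)).trans (mul_le_mul_of_nonneg_left (hvb j) hκθ)
        linarith
      have h1 : vecNorm (vvec' A B lam y (j + 1))
          ≤ (κ * lam0)⁻¹ * (κ * (Real.sqrt (1 + δ) * My) + κ * θ * Cv) := by
        simp only [vvec']
        exact (hQ'inv (j + 1) _).trans (mul_le_mul_of_nonneg_left h2 (inv_nonneg.2 hKlam.le))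
      refine h1.trans (le_of_eq ?_)
      rw [hCv_def]
      field_simp
  -- conclusion
  intro k
  constructor
  · have hred : alphaEst A B lam y k k = vvec' A B lam y k := by
      simp only [alphaEst, Nat.sub_self, alphaAux]
    rw [hred]
    exact hv'b k
  · have hred : alphaEst A B lam y k (k + 1)
        = vvec A B lam y k - (Umat A B lam k).mulVec (vvec' A B lam y (k + 1)) := by
      simp only [alphaEst, Nat.add_sub_cancel_left, alphaAux]
      norm_num
    rw [hred]
    have hU : vecNorm ((Umat A B lam k).mulVec (vvec' A B lam y (k + 1)))
        ≤ (κ * (1 - ε))⁻¹ * (κ * θ *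
          (lam0⁻¹ * (1 + θ / (1 - ε - θ)) * Real.sqrt (1 + δ) * My)) := by
      unfold Umat
      rw [← Matrix.mulVec_mulVec]
      refine (hQinv k _).trans (mul_le_mul_of_nonneg_left ?_ (inv_nonneg.2 hκε.le))
      exact (hEtpt k _).trans (mul_le_mul_of_nonneg_left (hv'b (k + 1)) hκθ)
    have htri := vecNorm_sub_le (vvec A B lam y k)
      ((Umat A B lam k).mulVec (vvec' A B lam y (k + 1)))
    have heq2 : Cv + (κ * (1 - ε))⁻¹ * (κ * θ *
          (lam0⁻¹ * (1 + θ / (1 - ε - θ)) * Real.sqrt (1 + δ) * My))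
        = ((1 + lam0⁻¹ * θ) / (1 - ε - θ)) * Real.sqrt (1 + δ) * My := by
      rw [hCv_def]
      field_simp
      ring
    linarith [hvb k, hU]
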